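/- The line graph L(D_3) of the 3-dragon is not 3-colorable (its chromatic number is 4), while for every vertex v of L(D_3) the subgraph induced on the remaining vertices is 3-colorable. -/

import Mathlib

open SimpleGraph
set_option maxRecDepth 8000
set_option synthInstance.maxHeartbeats 1000000
set_option synthInstance.maxSize 2000


/-- The edge relation of the `d`-dragon on vertex indices `0,…,d+1`:
vertices `0,…,d` are pairwise adjacent except `0` and `d`, and vertex `d+1`
is adjacent exactly to `0` and `d`. -/
def dragonRel (d : ℕ) (u v : ℕ) : Prop :=
  (u < d + 1 ∧ v < d + 1 ∧ ¬(u = 0 ∧ v = d) ∧ ¬(u = d ∧ v = 0)) ∨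
  (u = d + 1 ∧ (v = 0 ∨ v = d))

/-- The `d`-dragon `D_d`: the graph obtained from `K_{d+1}` by replacing one of its
edges by a path on 3 vertices. -/
def dragon (d : ℕ) : SimpleGraph (Fin (d + 2)) :=
  SimpleGraph.fromRel (fun u v => dragonRel d u.val v.val)

instance (d u v : ℕ) : Decidable (dragonRel d u v) := by
  unfold dragonRel; infer_instance

instance (d : ℕ) : DecidableRel (dragon d).Adj := fun a b =>
  decidable_of_iff _ (SimpleGraph.fromRel_adj _ a b).symm

instance : DecidableRel (dragon 3).lineGraph.Adj := fun a b =>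
  decidable_of_iff _ (SimpleGraph.lineGraph_adj_iff_exists).symm

/-- endpoints of the 7 edges of `dragon 3` -/
def ends : Fin 7 → Fin 5 × Fin 5
| 0 => (0,1) | 1 => (0,2) | 2 => (1,2) | 3 => (1,3) | 4 => (2,3) | 5 => (0,4) | 6 => (3,4)

def adjR (i j : Fin 7) : Prop :=
  i ≠ j ∧ ((ends i).1 = (ends j).1 ∨ (ends i).1 = (ends j).2 ∨
    (ends i).2 = (ends j).1 ∨ (ends i).2 = (ends j).2)

instance (i j : Fin 7) : Decidable (adjR i j) := by unfold adjR; infer_instance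

lemma hEv : ∀ i : Fin 7, s((ends i).1, (ends i).2) ∈ (dragon 3).edgeSet := by decide

def ev (i : Fin 7) : (dragon 3).edgeSet := ⟨s((ends i).1, (ends i).2), hEv i⟩

lemma hom_ev : ∀ i j : Fin 7, adjR i j → (dragon 3).lineGraph.Adj (ev i) (ev j) := by decide

lemma noc3 : ¬ ∃ g : Fin 7 → Fin 3, ∀ i j, adjR i j → g i ≠ g j := by
  rintro ⟨g, h⟩
  have h01 := h 0 1 (by decide); have h05 := h 0 5 (by decide); have h15 := h 1 5 (by decide)
  have h02 := h 0 2 (by decide); have h03 := h 0 3 (by decide); have h23 := h 2 3 (by decide)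
  have h12 := h 1 2 (by decide); have h14 := h 1 4 (by decide); have h24 := h 2 4 (by decide)
  have h34 := h 3 4 (by decide); have h36 := h 3 6 (by decide); have h46 := h 4 6 (by decide)
  have h56 := h 5 6 (by decide)
  simp only [Ne, Fin.ext_iff] at *
  omega

lemma part1 : ¬ (dragon 3).lineGraph.Colorable 3 := by
  rintro ⟨C⟩
  exact noc3 ⟨fun i => C (ev i), fun i j hij => C.valid (hom_ev i j hij)⟩

/-- a proper 4-edge-coloring of `dragon 3`, as a symmetric matrix -/
def m4 : Fin 5 → Fin 5 → Fin 4 := fun a b =>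
  match a, b with
  | 0,1 => 0 | 1,0 => 0 | 0,2 => 1 | 2,0 => 1 | 1,2 => 2 | 2,1 => 2
  | 1,3 => 3 | 3,1 => 3 | 2,3 => 0 | 3,2 => 0 | 0,4 => 2 | 4,0 => 2
  | 3,4 => 1 | 4,3 => 1 | _,_ => 0

def g4 : Sym2 (Fin 5) → Fin 4 := Sym2.lift ⟨m4, by decide⟩

lemma g4_valid : ∀ a b c d : Fin 5, s(a,b) ∈ (dragon 3).edgeSet →
    s(c,d) ∈ (dragon 3).edgeSet → s(a,b) ≠ s(c,d) →
    (∃ w, w ∈ s(a,b) ∧ w ∈ s(c,d)) → g4 s(a,b) ≠ g4 s(c,d) := by decide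

lemma g4_valid' : ∀ x y : Sym2 (Fin 5), x ∈ (dragon 3).edgeSet →
    y ∈ (dragon 3).edgeSet → x ≠ y →
    (∃ w, w ∈ x ∧ w ∈ y) → g4 x ≠ g4 y := by
  intro x y
  induction x using Sym2.ind with | _ a b =>
  induction y using Sym2.ind with | _ c d =>
  exact g4_valid a b c d

lemma part2 : (dragon 3).lineGraph.Colorable 4 := by
  refine ⟨SimpleGraph.Coloring.mk (fun x => g4 x.val) ?_⟩
  intro x y hadj
  rw [SimpleGraph.lineGraph_adj_iff_exists] at hadj
  obtain ⟨hne, w, hw1, hw2⟩ := hadj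
  exact g4_valid' x.val y.val x.2 y.2 (fun h => hne (Subtype.ext h)) ⟨w, hw1, hw2⟩

lemma ev_surj : ∀ x : (dragon 3).edgeSet, ∃ k, ev k = x := by
  have key : ∀ a b : Fin 5, s(a,b) ∈ (dragon 3).edgeSet →
      ∃ k : Fin 7, s((ends k).1, (ends k).2) = s(a,b) := by decide
  rintro ⟨x, hx⟩
  induction x using Sym2.ind with | _ a b =>
  obtain ⟨k, hk⟩ := key a b hx
  exact ⟨k, Subtype.ext hk⟩

/-- for each deleted edge `j`, a proper 3-coloring of the remaining edges -/
def table : Fin 7 → Fin 7 → Fin 3 :=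
  ![![0,0,1,0,2,2,1],
    ![0,0,1,2,0,2,1],
    ![0,1,0,2,0,2,1],
    ![0,1,2,0,0,2,1],
    ![0,1,2,1,0,2,0],
    ![0,1,2,1,0,0,2],
    ![0,1,2,1,0,2,0]]

def m7 : Fin 5 → Fin 5 → Fin 7 := fun a b =>
  match a, b with
  | 0,1 => 0 | 1,0 => 0 | 0,2 => 1 | 2,0 => 1 | 1,2 => 2 | 2,1 => 2
  | 1,3 => 3 | 3,1 => 3 | 2,3 => 4 | 3,2 => 4 | 0,4 => 5 | 4,0 => 5
  | 3,4 => 6 | 4,3 => 6 | _,_ => 0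

def idx : Sym2 (Fin 5) → Fin 7 := Sym2.lift ⟨m7, by decide⟩

lemma tbl_valid : ∀ (a b c d : Fin 5) (k : Fin 7),
    s(a,b) ∈ (dragon 3).edgeSet → s(c,d) ∈ (dragon 3).edgeSet →
    s(a,b) ≠ s((ends k).1, (ends k).2) → s(c,d) ≠ s((ends k).1, (ends k).2) →
    s(a,b) ≠ s(c,d) → (∃ w, w ∈ s(a,b) ∧ w ∈ s(c,d)) →
    table k (idx s(a,b)) ≠ table k (idx s(c,d)) := by decide

lemma tbl_valid' : ∀ (k : Fin 7) (x y : Sym2 (Fin 5)),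
    x ∈ (dragon 3).edgeSet → y ∈ (dragon 3).edgeSet →
    x ≠ (ev k).val → y ≠ (ev k).val → x ≠ y →
    (∃ w, w ∈ x ∧ w ∈ y) →
    table k (idx x) ≠ table k (idx y) := by
  intro k x y
  induction x using Sym2.ind with | _ a b =>
  induction y using Sym2.ind with | _ c d =>
  exact tbl_valid a b c d k



/-- **`L(D_3)` is vertex-critically non-3-colorable.** The line graph of the 3-dragon
is not 3-colorable (its chromatic number is 4), while deleting any single vertex
leaves a 3-colorable graph. -/
theorem dragon3_lineGraph_critical :
    ¬ (dragon 3).lineGraph.Colorable 3 ∧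
    (dragon 3).lineGraph.chromaticNumber = 4 ∧
    ∀ v : (dragon 3).edgeSet,
      ((dragon 3).lineGraph.induce {v}ᶜ).Colorable 3 := by
  refine ⟨part1, ?_, ?_⟩
  · refine le_antisymm ?_ ?_
    · simpa using part2.chromaticNumber_le
    · have hgt : (3 : ℕ∞) < (dragon 3).lineGraph.chromaticNumber := by
        by_contra hle
        push_neg at hle
        exact part1 (SimpleGraph.chromaticNumber_le_iff_colorable.mp (by exact_mod_cast hle))
      have := (ENat.add_one_le_iff (m := 3) (by simp)).mpr hgt
      rwa [show (3 : ℕ∞) + 1 = 4 by norm_num] at this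
  · intro v
    obtain ⟨k, hk⟩ := ev_surj v
    refine ⟨SimpleGraph.Coloring.mk (fun w => table k (idx w.val.val)) ?_⟩
    intro w1 w2 hadj
    have hadj' : (dragon 3).lineGraph.Adj w1.val w2.val := hadj
    rw [SimpleGraph.lineGraph_adj_iff_exists] at hadj'
    obtain ⟨hne, w, hw1, hw2⟩ := hadj'
    have h1 : w1.val ≠ v := w1.2
    have h2 : w2.val ≠ v := w2.2
    exact tbl_valid' k w1.val.val w2.val.val w1.val.2 w2.val.2
      (fun h => h1 ((Subtype.ext h).trans hk))
      (fun h => h2 ((Subtype.ext h).trans hk))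
      (fun h => hne (Subtype.ext h)) ⟨w, hw1, hw2⟩
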